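/- Suppose A ⊆ ℤ^r is an (n_1, ..., n_r)-strongly r-dimensional finite set. Then ∫_{[0,1]^r} |∑_{a ∈ A} e(a·t)| dt ≥ C_MPS^r · log(n_1) ⋯ log(n_r), where C_MPS is the absolute constant from the McGehee–Pigno–Smith inequality. -/
import Mathlib


open MeasureTheory

/-- `e z = e^{2πiz}`. -/
noncomputable def e (x : ℝ) : ℂ := Complex.exp (2 * Real.pi * Complex.I * x)

/-- `A ⊆ ℤ^{r+1}` is `(n 0, …, n r)`-strongly `(r+1)`-dimensional:
for `r = 0` this means `|A| ≥ n 0`; inductively it means the first-coordinate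
projection `A_1` has `|A_1| ≥ n 0` and every fibre `A_1^*(a_1)` (with first
coordinate deleted) is `(n 1, …, n r)`-strongly `r`-dimensional. -/
def StronglyDim : (r : ℕ) → Finset (Fin (r + 1) → ℤ) → (Fin (r + 1) → ℕ) → Prop
  | 0, A, n => n 0 ≤ A.card
  | r + 1, A, n =>
      n 0 ≤ (A.image (fun v => v 0)).card ∧
      ∀ a1 ∈ A.image (fun v => v 0),
        StronglyDim r ((A.filter (fun v => v 0 = a1)).image Fin.tail) (Fin.tail n)

lemma continuous_e : Continuous e := by unfold e; fun_prop

lemma e_add (x y : ℝ) : e (x + y) = e x * e y := by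
  unfold e; rw [← Complex.exp_add]; push_cast; ring_nf

lemma contSum (k : ℕ) (A : Finset (Fin k → ℤ)) :
    Continuous fun t : Fin k → ℝ => ∑ v ∈ A, e (∑ i, ((v i : ℤ) : ℝ) * t i) :=
  continuous_finset_sum _ fun v _ => continuous_e.comp (by fun_prop)

lemma harmonic_ge (m k : ℕ) (hm : m ≤ k) :
    Real.log m ≤ ∑ j : Fin k, 1 / ((j : ℕ) + 1 : ℝ) := by
  have h1 : ∑ j : Fin k, 1 / ((j : ℕ) + 1 : ℝ) = (harmonic k : ℝ) := by
    rw [harmonic, Fin.sum_univ_eq_sum_range (fun i : ℕ => 1 / ((i : ℝ) + 1)) k]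
    push_cast
    simp [one_div]
  rw [h1]
  have h2 : Real.log m ≤ Real.log (k + 1 : ℕ) := by
    rcases Nat.eq_zero_or_pos m with rfl | hm0
    · simpa using Real.log_natCast_nonneg (k + 1)
    · exact Real.log_le_log (by exact_mod_cast hm0) (by exact_mod_cast Nat.le_succ_of_le hm)
  exact h2.trans (log_add_one_le_harmonic k)

lemma sum_div_bound {K : ℝ} (hK : 0 ≤ K) {m k : ℕ} (hm : m ≤ k)
    (x : Fin k → ℝ) (hx : ∀ j, K ≤ x j) :
    K * Real.log m ≤ ∑ j : Fin k, x j / ((j : ℕ) + 1 : ℝ) := by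
  calc K * Real.log m ≤ K * ∑ j : Fin k, 1 / ((j : ℕ) + 1 : ℝ) :=
        mul_le_mul_of_nonneg_left (harmonic_ge m k hm) hK
    _ = ∑ j : Fin k, K / ((j : ℕ) + 1 : ℝ) := by
        rw [Finset.mul_sum]; congr 1; ext j; rw [mul_one_div]
    _ ≤ _ := Finset.sum_le_sum fun j _ => by gcongr; exact hx j

lemma mps_finset (C : ℝ)
    (hMPS : ∀ (n : ℕ) (a : Fin n → ℤ) (u : Fin n → ℂ), StrictMono a →
      (∫ t in (0:ℝ)..1, ‖∑ j, u j * e ((a j : ℝ) * t)‖) ≥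
        C * ∑ j, ‖u j‖ / (j.1 + 1 : ℝ))
    (B : Finset ℤ) (u : ℤ → ℂ) :
    (∫ t in (0:ℝ)..1, ‖∑ b ∈ B, u b * e ((b : ℝ) * t)‖) ≥
      C * ∑ j : Fin B.card, ‖u (B.orderEmbOfFin rfl j)‖ / ((j : ℕ) + 1 : ℝ) := by
  have key : ∀ (f : ℤ → ℂ), ∑ b ∈ B, f b = ∑ j : Fin B.card, f (B.orderEmbOfFin rfl j) := by
    intro f
    rw [← Finset.sum_coe_sort B]
    exact (Fintype.sum_equiv (B.orderIsoOfFin rfl).toEquiv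
      (fun j => f (B.orderEmbOfFin rfl j)) (fun x => f ↑x)
      (fun j => by simp [Finset.coe_orderIsoOfFin_apply])).symm
  have hre : (fun t : ℝ => ‖∑ b ∈ B, u b * e ((b : ℝ) * t)‖)
      = fun t => ‖∑ j : Fin B.card, u (B.orderEmbOfFin rfl j) * e ((B.orderEmbOfFin rfl j : ℝ) * t)‖ := by
    funext t; rw [key (fun b => u b * e ((b : ℝ) * t))]
  rw [intervalIntegral.integral_congr (fun t _ => congrFun hre t)]
  exact hMPS B.card _ _ (fun i j hij => (B.orderEmbOfFin rfl).strictMono hij)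

lemma funUnique_image_Icc :
    (MeasurableEquiv.funUnique (Fin 1) ℝ) '' Set.Icc (0 : Fin 1 → ℝ) 1 = Set.Icc (0:ℝ) 1 := by
  rw [show ⇑(MeasurableEquiv.funUnique (Fin 1) ℝ)
      = ⇑(MeasurableEquiv.funUnique (Fin 1) ℝ).toEquiv from rfl, Equiv.image_eq_preimage_symm]
  ext y
  simp [MeasurableEquiv.funUnique, Set.mem_Icc, Pi.le_def, Equiv.funUnique]

lemma piFinSuccAbove_image_Icc (r : ℕ) :
    (MeasurableEquiv.piFinSuccAbove (fun _ : Fin (r+2) => ℝ) 0) '' Set.Icc 0 1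
      = Set.Icc (0:ℝ) 1 ×ˢ Set.Icc (0 : Fin (r+1) → ℝ) 1 := by
  rw [show ⇑(MeasurableEquiv.piFinSuccAbove (fun _ : Fin (r+2) => ℝ) 0)
      = ⇑(MeasurableEquiv.piFinSuccAbove (fun _ : Fin (r+2) => ℝ) 0).toEquiv from rfl,
    Equiv.image_eq_preimage_symm]
  ext ⟨x, s⟩
  simp only [Set.mem_preimage, MeasurableEquiv.piFinSuccAbove_symm_apply, Set.mem_prod,
    Set.mem_Icc, Pi.le_def, Fin.insertNth_zero']
  constructor
  · rintro ⟨h0, h1⟩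
    refine ⟨⟨by simpa using h0 0, by simpa using h1 0⟩, fun j => by simpa using h0 j.succ,
      fun j => by simpa using h1 j.succ⟩
  · rintro ⟨⟨hx0, hx1⟩, hs0, hs1⟩
    constructor <;> intro i <;> refine Fin.cases ?_ (fun j => ?_) i
    · simpa using hx0
    · simpa using hs0 j
    · simpa using hx1
    · simpa using hs1 j

set_option maxHeartbeats 2000000 in
/-- Theorem 1.3: if `A ⊆ ℤ^r` (here `r = r'+1 ≥ 1`) is `(n_1,…,n_r)`-strongly
`r`-dimensional, then `∫_{[0,1]^r} |∑_{a∈A} e(a·t)| dt ≥ C_MPS^r log(n_1)⋯log(n_r)`,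
where `C_MPS` is the constant from the McGehee–Pigno–Smith inequality. -/
theorem littlewood_strongly_multidimensional
    (C : ℝ) (hC : 0 < C)
    (hMPS : ∀ (n : ℕ) (a : Fin n → ℤ) (u : Fin n → ℂ), StrictMono a →
      (∫ t in (0:ℝ)..1, ‖∑ j, u j * e ((a j : ℝ) * t)‖) ≥
        C * ∑ j, ‖u j‖ / (j.1 + 1 : ℝ))
    (r' : ℕ) (n : Fin (r' + 1) → ℕ) (A : Finset (Fin (r' + 1) → ℤ))
    (hA : StronglyDim r' A n) :
    (∫ t in Set.Icc (0 : Fin (r' + 1) → ℝ) 1,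
        ‖∑ v ∈ A, e (∑ i, (v i : ℝ) * t i)‖) ≥
      C ^ (r' + 1) * ∏ i, Real.log (n i) := by
  induction r' with
  | zero =>
    simp only [StronglyDim] at hA
    set B := A.image (fun v => v 0) with hBdef
    have hinj : Function.Injective (fun v : Fin 1 → ℤ => v 0) := fun v w h =>
      funext fun i => by rw [Subsingleton.elim i 0]; exact h
    have hcard : A.card = B.card := (Finset.card_image_of_injective _ hinj).symm
    have hψ := volume_preserving_funUnique (Fin 1) ℝ
    have step1 : (∫ t in Set.Icc (0 : Fin 1 → ℝ) 1, ‖∑ v ∈ A, e (∑ i, (v i : ℝ) * t i)‖)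
        = ∫ y in Set.Icc (0:ℝ) 1, ‖∑ b ∈ B, (1:ℂ) * e ((b:ℝ) * y)‖ := by
      rw [← funUnique_image_Icc,
        hψ.setIntegral_image_emb (MeasurableEquiv.measurableEmbedding _)
          (fun y => ‖∑ b ∈ B, (1:ℂ) * e ((b:ℝ) * y)‖) (Set.Icc 0 1)]
      apply setIntegral_congr_fun measurableSet_Icc
      intro t _
      show ‖∑ v ∈ A, e (∑ i, (v i : ℝ) * t i)‖ = ‖∑ b ∈ B, (1:ℂ) * e ((b:ℝ) * (t default))‖
      rw [hBdef, Finset.sum_image (fun v _ w _ h => hinj h)]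
      apply congrArg
      apply Finset.sum_congr rfl
      intro v _
      rw [one_mul, Fin.sum_univ_one]
      rfl
    have step2 : (∫ y in Set.Icc (0:ℝ) 1, ‖∑ b ∈ B, (1:ℂ) * e ((b:ℝ) * y)‖)
        = ∫ y in (0:ℝ)..1, ‖∑ b ∈ B, (1:ℂ) * e ((b:ℝ) * y)‖ := by
      rw [integral_Icc_eq_integral_Ioc, intervalIntegral.integral_of_le zero_le_one]
    have hb := mps_finset C hMPS B (fun _ => (1:ℂ))
    have hhar : Real.log (n 0) ≤ ∑ j : Fin B.card, ‖(1:ℂ)‖ / ((j : ℕ) + 1 : ℝ) := by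
      simpa using harmonic_ge (n 0) B.card (hcard ▸ hA)
    rw [ge_iff_le, step1, step2]
    calc C ^ (0 + 1) * ∏ i : Fin 1, Real.log (n i) = C * Real.log (n 0) := by
          rw [pow_one, Fin.prod_univ_one]
      _ ≤ C * ∑ j : Fin B.card, ‖(1:ℂ)‖ / ((j : ℕ) + 1 : ℝ) :=
          mul_le_mul_of_nonneg_left hhar hC.le
      _ ≤ _ := hb
  | succ r ih =>
    simp only [StronglyDim] at hA
    obtain ⟨hcard, hfib⟩ := hA
    set B := A.image (fun v => v 0) with hBdef
    set Fib : ℤ → Finset (Fin (r + 1) → ℤ) :=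
      fun b => (A.filter (fun v => v 0 = b)).image Fin.tail with hFibdef
    set g : ℤ → (Fin (r + 1) → ℝ) → ℂ :=
      fun b s => ∑ w ∈ Fib b, e (∑ i, ((w i : ℤ) : ℝ) * s i) with hgdef
    set S : Set ℝ := Set.Icc 0 1 with hSdef
    set T : Set (Fin (r + 1) → ℝ) := Set.Icc 0 1 with hTdef
    set G : ℝ × (Fin (r + 1) → ℝ) → ℝ :=
      fun p => ‖∑ b ∈ B, g b p.2 * e ((b : ℝ) * p.1)‖ with hGdef
    -- pointwise splitting
    have hsplit : ∀ (x : ℝ) (s : Fin (r + 1) → ℝ),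
        ∑ v ∈ A, e ((v 0 : ℝ) * x + ∑ i, ((Fin.tail v i : ℤ) : ℝ) * s i)
          = ∑ b ∈ B, g b s * e ((b : ℝ) * x) := by
      intro x s
      rw [hBdef]
      rw [← Finset.sum_fiberwise_of_maps_to (g := fun v : Fin (r + 2) → ℤ => v 0)
        (t := A.image (fun v => v 0)) (fun v hv => Finset.mem_image_of_mem _ hv)
        (fun v : Fin (r + 2) → ℤ => e ((v 0 : ℝ) * x + ∑ i, ((Fin.tail v i : ℤ) : ℝ) * s i))]
      apply Finset.sum_congr rfl
      intro b _
      have htinj : ∀ v ∈ A.filter (fun v => v 0 = b), ∀ w ∈ A.filter (fun v => v 0 = b),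
          Fin.tail v = Fin.tail w → v = w := by
        intro v hv w hw h
        rw [Finset.mem_filter] at hv hw
        funext i
        refine Fin.cases ?_ (fun j => ?_) i
        · rw [hv.2, hw.2]
        · exact congrFun h j
      rw [hgdef]
      simp only
      rw [hFibdef]
      simp only
      rw [Finset.sum_image htinj, Finset.sum_mul]
      apply Finset.sum_congr rfl
      intro v hv
      rw [Finset.mem_filter] at hv
      rw [e_add, hv.2, mul_comm]
    -- continuity and integrability
    have hGcont : Continuous G := by
      apply Continuous.norm
      apply continuous_finset_sum
      intro b _
      exact ((contSum (r + 1) (Fib b)).comp continuous_snd).mul (continuous_e.comp (by fun_prop))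
    have hGint : Integrable G ((volume.restrict S).prod (volume.restrict T)) := by
      rw [Measure.prod_restrict]
      exact hGcont.continuousOn.integrableOn_compact (isCompact_Icc.prod isCompact_Icc)
    -- change of variables
    have hφ := volume_preserving_piFinSuccAbove (fun _ : Fin (r + 2) => ℝ) 0
    have step1 : (∫ t in Set.Icc (0 : Fin (r + 2) → ℝ) 1, ‖∑ v ∈ A, e (∑ i, (v i : ℝ) * t i)‖)
        = ∫ p in S ×ˢ T, G p := by
      rw [← piFinSuccAbove_image_Icc r,
        hφ.setIntegral_image_emb (MeasurableEquiv.measurableEmbedding _) G (Set.Icc 0 1)]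
      apply setIntegral_congr_fun measurableSet_Icc
      intro t _
      show ‖∑ v ∈ A, e (∑ i, (v i : ℝ) * t i)‖
          = ‖∑ b ∈ B, g b (fun j => t (Fin.succ j)) * e ((b : ℝ) * t 0)‖
      rw [← hsplit (t 0) (fun j => t (Fin.succ j))]
      apply congrArg
      apply Finset.sum_congr rfl
      intro v _
      apply congrArg
      rw [Fin.sum_univ_succ]
      rfl
    -- Fubini
    have step2 : (∫ p in S ×ˢ T, G p)
        = ∫ s in T, ∫ x in S, G (x, s) := by
      rw [show (volume : Measure (ℝ × (Fin (r + 1) → ℝ))) = volume.prod volume from rfl,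
        ← Measure.prod_restrict]
      exact integral_prod_symm G hGint
    -- inner bound
    have hpt : ∀ s : Fin (r + 1) → ℝ,
        C * ∑ j : Fin B.card, ‖g (B.orderEmbOfFin rfl j) s‖ / ((j : ℕ) + 1 : ℝ)
          ≤ ∫ x in S, G (x, s) := by
      intro s
      have : (∫ x in S, G (x, s)) = ∫ x in (0:ℝ)..1, ‖∑ b ∈ B, g b s * e ((b : ℝ) * x)‖ := by
        rw [hSdef, integral_Icc_eq_integral_Ioc, intervalIntegral.integral_of_le zero_le_one]
      rw [this]
      exact mps_finset C hMPS B (fun b => g b s)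
    -- integrability of both sides of outer comparison
    have hhint : Integrable (fun s => ∫ x in S, G (x, s)) (volume.restrict T) := by
      have := (hGint.swap).integral_prod_left
      exact this
    have hgcont : ∀ b : ℤ, Continuous fun s => ‖g b s‖ := fun b => (contSum (r + 1) (Fib b)).norm
    have hRint : Integrable
        (fun s => C * ∑ j : Fin B.card, ‖g (B.orderEmbOfFin rfl j) s‖ / ((j : ℕ) + 1 : ℝ))
        (volume.restrict T) := by
      apply Integrable.const_mul
      apply integrable_finset_sum
      intro j _
      exact (((hgcont _).div_const _).continuousOn.integrableOn_compact isCompact_Icc)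
    have step3 : (∫ s in T, C * ∑ j : Fin B.card,
          ‖g (B.orderEmbOfFin rfl j) s‖ / ((j : ℕ) + 1 : ℝ))
        ≤ ∫ s in T, ∫ x in S, G (x, s) :=
      integral_mono hRint hhint hpt
    -- compute the lower integral
    have step4 : (∫ s in T, C * ∑ j : Fin B.card,
          ‖g (B.orderEmbOfFin rfl j) s‖ / ((j : ℕ) + 1 : ℝ))
        = C * ∑ j : Fin B.card,
            (∫ s in T, ‖g (B.orderEmbOfFin rfl j) s‖) / ((j : ℕ) + 1 : ℝ) := by
      rw [integral_const_mul]
      congr 1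
      rw [integral_finset_sum _ (fun j _ =>
        ((hgcont _).div_const _).continuousOn.integrableOn_compact isCompact_Icc)]
      apply Finset.sum_congr rfl
      intro j _
      rw [integral_div]
    -- IH bound
    set K : ℝ := C ^ (r + 1) * ∏ i, Real.log (Fin.tail n i) with hKdef
    have hK0 : 0 ≤ K := by
      apply mul_nonneg (pow_nonneg hC.le _)
      exact Finset.prod_nonneg fun i _ => Real.log_natCast_nonneg _
    have hIb : ∀ j : Fin B.card, K ≤ ∫ s in T, ‖g (B.orderEmbOfFin rfl j) s‖ := by
      intro j
      have hmem : B.orderEmbOfFin rfl j ∈ B := Finset.orderEmbOfFin_mem B rfl j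
      exact ih (Fin.tail n) (Fib (B.orderEmbOfFin rfl j)) (hfib _ hmem)
    have hfinal : C * (K * Real.log (n 0)) ≤ C * ∑ j : Fin B.card,
        (∫ s in T, ‖g (B.orderEmbOfFin rfl j) s‖) / ((j : ℕ) + 1 : ℝ) := by
      apply mul_le_mul_of_nonneg_left _ hC.le
      exact sum_div_bound hK0 hcard _ hIb
    rw [ge_iff_le, step1, step2]
    refine le_trans ?_ (le_trans (step4 ▸ hfinal) step3)
    rw [hKdef, Fin.prod_univ_succ]
    apply le_of_eq
    ring_nf
    rfl
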